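/- Define the one-step EKF0 posterior covariance with zero initial covariance and zero measurement noise by P(δ) = (I₂ − K(δ)·H₁)·Q(δ), where K(δ) = Q(δ)·H₁ᵀ·(H₁·Q(δ)·H₁ᵀ)⁻¹. Then there exists C > 0, depending only on θ and η, such that for all 0 < δ ≤ 1: |P(δ)₀,₀ − η²·δ³/12| ≤ C·δ⁵. -/

import Mathlib

open Matrix MeasureTheory Real

noncomputable section

/-- Drift matrix `F = [[0, 1], [0, −θ]]` of the integrated Ornstein–Uhlenbeck prior. -/
def Fmat (θ : ℝ) : Matrix (Fin 2) (Fin 2) ℝ := !![0, 1; 0, -θ]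

/-- Diffusion column vector `L = (0, η)ᵀ`. -/
def Lmat (η : ℝ) : Matrix (Fin 2) (Fin 1) ℝ := !![0; η]

/-- Noise covariance `Q(δ) = ∫₀^δ exp(sF)·L·Lᵀ·exp(sFᵀ) ds` (entrywise Bochner integral). -/
def Qmat (θ η δ : ℝ) : Matrix (Fin 2) (Fin 2) ℝ :=
  Matrix.of fun i j => ∫ s in (0:ℝ)..δ,
    (NormedSpace.exp (s • Fmat θ) * (Lmat η * (Lmat η)ᵀ) *
      NormedSpace.exp (s • (Fmat θ)ᵀ)) i j


/-- Observation row vector `H₁ = (0, 1)`. -/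
def H1row : Matrix (Fin 1) (Fin 2) ℝ := !![0, 1]

/-- Kalman gain `K(δ) = Q(δ)·H₁ᵀ·(H₁·Q(δ)·H₁ᵀ)⁻¹` with zero measurement noise. -/
def Kgain (θ η δ : ℝ) : Matrix (Fin 2) (Fin 1) ℝ :=
  Qmat θ η δ * H1rowᵀ * (H1row * Qmat θ η δ * H1rowᵀ)⁻¹

/-- One-step EKF0 posterior covariance `P(δ) = (I₂ − K(δ)·H₁)·Q(δ)` with zero initial
covariance and zero measurement noise. -/
def Pmat (θ η δ : ℝ) : Matrix (Fin 2) (Fin 2) ℝ :=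
  ((1 : Matrix (Fin 2) (Fin 2) ℝ) - Kgain θ η δ * H1row) * Qmat θ η δ

def gg (θ s : ℝ) : ℝ := if θ = 0 then s else (1 - Real.exp (-(θ*s)))/θ

lemma diag_two (a b : ℝ) : Matrix.diagonal ![a, b] = !![a, 0; 0, b] := by
  ext i j
  fin_cases i <;> fin_cases j <;> simp [Matrix.diagonal_apply]

lemma exp_smul_F (θ s : ℝ) :
    NormedSpace.exp (s • Fmat θ) = !![1, gg θ s; 0, Real.exp (-(θ*s))] := by
  rcases eq_or_ne θ 0 with h | h
  · subst h
    have hsq : (s • Fmat 0) ^ 2 = 0 := by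
      ext i j
      fin_cases i <;> fin_cases j <;>
        simp [Fmat, pow_two, Matrix.mul_apply, Fin.sum_univ_two]
    have hn : ∀ n ∉ Finset.range 2, (n.factorial : ℝ)⁻¹ • (s • Fmat 0) ^ n = 0 := by
      intro n hnn
      obtain ⟨k, rfl⟩ := Nat.exists_eq_add_of_le (by simp at hnn; omega : 2 ≤ n)
      rw [pow_add, hsq, zero_mul, smul_zero]
    rw [NormedSpace.exp_eq_tsum ℝ]
    dsimp only
    rw [tsum_eq_sum hn]
    ext i j
    fin_cases i <;> fin_cases j <;>
      simp [Finset.sum_range_succ, Fmat, gg, Matrix.one_apply]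
  · have hdet : (!![1, 1; 0, -θ] : Matrix (Fin 2) (Fin 2) ℝ).det = -θ := by
      simp [Matrix.det_fin_two_of]
    have hθu : IsUnit (!![1, 1; 0, -θ] : Matrix (Fin 2) (Fin 2) ℝ) := by
      rw [Matrix.isUnit_iff_isUnit_det, hdet, isUnit_iff_ne_zero]
      exact neg_ne_zero.2 h
    have hinv : (!![1, 1; 0, -θ] : Matrix (Fin 2) (Fin 2) ℝ)⁻¹ = !![1, 1/θ; 0, -(1/θ)] := by
      apply Matrix.inv_eq_right_inv
      ext i j
      fin_cases i <;> fin_cases j <;>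
        simp [Matrix.mul_apply, Fin.sum_univ_two, Matrix.one_apply] <;> field_simp
    have hconj : s • Fmat θ =
        !![1, 1; 0, -θ] * Matrix.diagonal ![0, -(θ*s)] * (!![1, 1; 0, -θ] : Matrix (Fin 2) (Fin 2) ℝ)⁻¹ := by
      rw [hinv, diag_two]
      ext i j
      fin_cases i <;> fin_cases j <;>
        · simp [Fmat, Matrix.mul_apply, Fin.sum_univ_two]
          try field_simp
          try ring
    rw [hconj, Matrix.exp_conj _ _ hθu, Matrix.exp_diagonal, hinv]
    have hv : (NormedSpace.exp (![0, -(θ*s)] : Fin 2 → ℝ)) = ![1, Real.exp (-(θ*s))] := by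
      funext i
      fin_cases i <;>
        simp [Pi.exp_def, ← Real.exp_eq_exp_ℝ]
    rw [hv, diag_two]
    ext i j
    fin_cases i <;> fin_cases j <;>
      · simp [Matrix.mul_apply, Fin.sum_univ_two, gg, h]
        try field_simp
        try ring



lemma integrand_eq (θ η s : ℝ) :
    (NormedSpace.exp (s • Fmat θ) * (Lmat η * (Lmat η)ᵀ) *
      NormedSpace.exp (s • (Fmat θ)ᵀ)) =
    !![η^2 * (gg θ s)^2, η^2 * (gg θ s * Real.exp (-(θ*s)));
       η^2 * (gg θ s * Real.exp (-(θ*s))), η^2 * (Real.exp (-(θ*s)))^2] := by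
  have ht : s • (Fmat θ)ᵀ = (s • Fmat θ)ᵀ := by rw [Matrix.transpose_smul]
  rw [ht, Matrix.exp_transpose, exp_smul_F]
  have hT : (!![1, gg θ s; 0, Real.exp (-(θ*s))] : Matrix (Fin 2) (Fin 2) ℝ)ᵀ
      = !![1, 0; gg θ s, Real.exp (-(θ*s))] := by
    ext i j; fin_cases i <;> fin_cases j <;> simp
  rw [hT]
  have hL : (Lmat η)ᵀ = !![0, η] := by
    ext i j; fin_cases i <;> fin_cases j <;> simp [Lmat]
  rw [hL]
  ext i j
  fin_cases i <;> fin_cases j <;>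
    · simp [Lmat, Matrix.mul_apply, Fin.sum_univ_two, Fin.sum_univ_one]
      ring

lemma Q_entries (θ η δ : ℝ) :
    Qmat θ η δ 0 0 = η^2 * ∫ s in (0:ℝ)..δ, (gg θ s)^2 ∧
    Qmat θ η δ 0 1 = η^2 * ∫ s in (0:ℝ)..δ, gg θ s * Real.exp (-(θ*s)) ∧
    Qmat θ η δ 1 0 = η^2 * ∫ s in (0:ℝ)..δ, gg θ s * Real.exp (-(θ*s)) ∧
    Qmat θ η δ 1 1 = η^2 * ∫ s in (0:ℝ)..δ, (Real.exp (-(θ*s)))^2 := by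
  refine ⟨?_, ?_, ?_, ?_⟩ <;>
    · show (∫ s in (0:ℝ)..δ, _) = _
      rw [← intervalIntegral.integral_const_mul]
      apply intervalIntegral.integral_congr
      intro s _
      dsimp only
      rw [integrand_eq]
      simp




lemma inv_one_by_one (a : ℝ) (ha : a ≠ 0) :
    (!![a] : Matrix (Fin 1) (Fin 1) ℝ)⁻¹ = !![a⁻¹] := by
  apply Matrix.inv_eq_right_inv
  ext i j
  fin_cases i; fin_cases j
  simp [Matrix.mul_apply, ha]

lemma P00_eq (θ η δ : ℝ) (hz : Qmat θ η δ 1 1 ≠ 0) :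
    Pmat θ η δ 0 0 = Qmat θ η δ 0 0 - Qmat θ η δ 0 1 * Qmat θ η δ 1 0 / Qmat θ η δ 1 1 := by
  have h1 : H1row * Qmat θ η δ * H1rowᵀ = !![Qmat θ η δ 1 1] := by
    ext i j
    fin_cases i; fin_cases j
    simp [H1row, Matrix.mul_apply, Matrix.vecMul, dotProduct,
      Fin.sum_univ_two, Fin.sum_univ_one]
  rw [Pmat, Kgain, h1, inv_one_by_one _ hz]
  simp [Matrix.mul_apply, Fin.sum_univ_two, Fin.sum_univ_one, H1row, Matrix.one_apply,
    Matrix.sub_apply]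
  field_simp
  ring

lemma cont_gg (θ : ℝ) : Continuous (gg θ) := by
  unfold gg
  rcases eq_or_ne θ 0 with h | h <;> simp [h] <;> fun_prop

lemma exp_integral' (a b : ℝ) : ∫ x in a..b, Real.exp x = Real.exp b - Real.exp a :=
  integral_exp

lemma gg_integral (θ s : ℝ) : gg θ s = ∫ u in (0:ℝ)..s, Real.exp (-(θ*u)) := by
  rcases eq_or_ne θ 0 with h | h
  · simp [gg, h]
  · have : ∀ u : ℝ, Real.exp (-(θ*u)) = Real.exp ((-θ) * u) := by intro u; ring_nf
    simp only [gg, h, if_false]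
    rw [intervalIntegral.integral_congr (g := fun u => Real.exp ((-θ)*u)) (fun u _ => this u)]
    rw [intervalIntegral.integral_comp_mul_left (fun x => Real.exp x) (neg_ne_zero.2 h)]
    rw [exp_integral']
    have h' : -θ ≠ 0 := neg_ne_zero.2 h
    simp only [smul_eq_mul, mul_zero, neg_zero, Real.exp_zero]
    field_simp
    ring

lemma gg_nonneg (θ s : ℝ) (hθ : 0 ≤ θ) (hs : 0 ≤ s) : 0 ≤ gg θ s := by
  rcases eq_or_ne θ 0 with h | h
  · simp [gg, h, hs]
  · have hθ' : 0 < θ := lt_of_le_of_ne hθ (Ne.symm h)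
    have : Real.exp (-(θ*s)) ≤ 1 := Real.exp_le_one_iff.2 (by nlinarith)
    simp only [gg, h, if_false]
    exact div_nonneg (by linarith) (le_of_lt hθ')

lemma gg_le (θ s : ℝ) (hθ : 0 ≤ θ) (hs : 0 ≤ s) : gg θ s ≤ s := by
  rcases eq_or_ne θ 0 with h | h
  · simp [gg, h]
  · have hθ' : 0 < θ := lt_of_le_of_ne hθ (Ne.symm h)
    have h1 : 1 - θ*s ≤ Real.exp (-(θ*s)) := by
      have := Real.add_one_le_exp (-(θ*s)); linarith
    simp only [gg, h, if_false]
    rw [div_le_iff₀ hθ']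
    nlinarith

lemma int_bound {δ K : ℝ} (hδ : 0 ≤ δ) {f : ℝ → ℝ} (h : ∀ s, 0 < s → s ≤ δ → |f s| ≤ K) :
    |∫ s in (0:ℝ)..δ, f s| ≤ K * δ := by
  have := intervalIntegral.norm_integral_le_of_norm_le_const (C := K) (f := f) (a := 0) (b := δ)
    (by intro x hx
        rw [Set.uIoc_of_le hδ] at hx
        exact h x hx.1 hx.2)
  simpa [abs_of_nonneg hδ] using this

-- pointwise taylor bounds, valid for 0 ≤ x := θ*s with  θ*s ≤ 1/2
lemma ee_taylor (θ s : ℝ) (hθ : 0 ≤ θ) (hs : 0 ≤ s) (hx : θ*s ≤ 1/2) :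
    |Real.exp (-(θ*s)) - (1 - θ*s)| ≤ θ^2*s^2 := by
  have h := Real.abs_exp_sub_one_sub_id_le (x := -(θ*s))
    (by rw [abs_neg, abs_of_nonneg (by positivity)]; linarith)
  calc |Real.exp (-(θ*s)) - (1 - θ*s)| = |Real.exp (-(θ*s)) - 1 - (-(θ*s))| := by ring_nf
    _ ≤ (-(θ*s))^2 := h
    _ ≤ θ^2*s^2 := by nlinarith

lemma ee2_taylor (θ s : ℝ) (hθ : 0 ≤ θ) (hs : 0 ≤ s) (hx : θ*s ≤ 1/2) :
    |Real.exp (-(θ*s))^2 - (1 - 2*(θ*s))| ≤ 4*θ^2*s^2 := by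
  have hsq : Real.exp (-(θ*s))^2 = Real.exp (-(2*θ*s)) := by
    rw [← Real.exp_nat_mul]; ring_nf
  have h := Real.abs_exp_sub_one_sub_id_le (x := -(2*θ*s))
    (by rw [abs_neg, abs_of_nonneg (by positivity)]; linarith)
  rw [hsq]
  calc |Real.exp (-(2*θ*s)) - (1 - 2*(θ*s))| = |Real.exp (-(2*θ*s)) - 1 - (-(2*θ*s))| := by ring_nf
    _ ≤ (-(2*θ*s))^2 := h
    _ ≤ 4*θ^2*s^2 := by nlinarith

lemma gg_taylor (θ s : ℝ) (hθ : 0 ≤ θ) (hs : 0 ≤ s) (hx : θ*s ≤ 1/2) :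
    |gg θ s - (s - θ*s^2/2)| ≤ θ^2*s^3 := by
  have hpoly : (s - θ*s^2/2) = ∫ u in (0:ℝ)..s, (1 - θ*u) := by
    rw [intervalIntegral.integral_sub intervalIntegrable_const
      (by apply Continuous.intervalIntegrable; fun_prop)]
    rw [intervalIntegral.integral_const_mul, integral_id]
    simp
    ring
  rw [gg_integral, hpoly, ← intervalIntegral.integral_sub
    (by apply Continuous.intervalIntegrable; fun_prop)
    (by apply Continuous.intervalIntegrable; fun_prop)]
  have h := int_bound (δ := s) (K := θ^2*s^2) hs (f := fun u => Real.exp (-(θ*u)) - (1 - θ*u)) ?_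
  · calc |∫ u in (0:ℝ)..s, (Real.exp (-(θ*u)) - (1 - θ*u))| ≤ θ^2*s^2*s := h
      _ = θ^2*s^3 := by ring
  · intro u hu hus
    have := ee_taylor θ u hθ hu.le (by nlinarith)
    calc |Real.exp (-(θ*u)) - (1 - θ*u)| ≤ θ^2*u^2 := this
      _ ≤ θ^2*s^2 := by
          have h2 : u^2 ≤ s^2 := pow_le_pow_left₀ hu.le hus 2
          nlinarith [sq_nonneg θ]

section estimates
variable {θ δ : ℝ}

lemma ee_pos (θ s : ℝ) : 0 < Real.exp (-(θ*s)) := Real.exp_pos _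
lemma ee_le_one (θ s : ℝ) (hθ : 0 ≤ θ) (hs : 0 ≤ s) : Real.exp (-(θ*s)) ≤ 1 :=
  Real.exp_le_one_iff.2 (by nlinarith)

-- pointwise bounds for products, 0 < s <= delta, theta*delta <= 1/2
lemma pw_A (hθ : 0 ≤ θ) (s : ℝ) (hs : 0 < s) (hsδ : s ≤ δ) (hx : θ*δ ≤ 1/2) :
    |gg θ s^2 - (s^2 - θ*s^3)| ≤ 4*θ^2*δ^4 := by
  have hxs : θ*s ≤ 1/2 := by nlinarith
  have hxs0 : 0 ≤ θ*s := mul_nonneg hθ hs.le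
  have h14 : θ^2*s^2 ≤ 1/4 := by nlinarith
  set r := gg θ s - (s - θ*s^2/2) with hrdef
  have h1 : |r| ≤ θ^2*s^3 := gg_taylor θ s hθ hs.le hxs
  have hp : |s - θ*s^2/2| ≤ s := by
    rw [abs_le]; constructor <;> nlinarith
  have e1 : gg θ s^2 - (s^2 - θ*s^3) = 2*(s - θ*s^2/2)*r + r^2 + θ^2*s^4/4 := by
    rw [hrdef]; ring
  have habs : |gg θ s^2 - (s^2 - θ*s^3)| ≤ 2*s*(θ^2*s^3) + (θ^2*s^3)^2 + θ^2*s^4/4 := by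
    rw [e1]
    refine (abs_add_le _ _).trans (add_le_add ((abs_add_le _ _).trans (add_le_add ?_ ?_)) ?_)
    · rw [abs_mul, abs_mul, abs_two]
      have := mul_le_mul hp h1 (abs_nonneg r) hs.le
      nlinarith [abs_nonneg r]
    · rw [abs_pow]
      exact pow_le_pow_left₀ (abs_nonneg r) h1 2
    · rw [abs_of_nonneg (by positivity)]
  have hs4 : s^4 ≤ δ^4 := pow_le_pow_left₀ hs.le hsδ 4
  calc |gg θ s^2 - (s^2 - θ*s^3)| ≤ 2*s*(θ^2*s^3) + (θ^2*s^3)^2 + θ^2*s^4/4 := habs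
    _ = 2*(θ^2*s^4) + (θ^2*s^2)*(θ^2*s^4) + (θ^2*s^4)/4 := by ring
    _ ≤ 2*(θ^2*s^4) + (1/4)*(θ^2*s^4) + (θ^2*s^4)/4 := by
        have : 0 ≤ θ^2*s^4 := by positivity
        nlinarith
    _ ≤ 4*(θ^2*s^4) := by nlinarith [sq_nonneg θ, pow_pos hs 4]
    _ ≤ 4*θ^2*δ^4 := by nlinarith [sq_nonneg θ]

lemma pw_B (hθ : 0 ≤ θ) (s : ℝ) (hs : 0 < s) (hsδ : s ≤ δ) (hx : θ*δ ≤ 1/2) :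
    |gg θ s * Real.exp (-(θ*s)) - (s - 3/2*θ*s^2)| ≤ 4*θ^2*δ^3 := by
  have hxs : θ*s ≤ 1/2 := by nlinarith
  have hxs0 : 0 ≤ θ*s := mul_nonneg hθ hs.le
  have h14 : θ^2*s^2 ≤ 1/4 := by nlinarith
  set r := gg θ s - (s - θ*s^2/2) with hrdef
  set w := Real.exp (-(θ*s)) - (1 - θ*s) with hwdef
  have h1 : |r| ≤ θ^2*s^3 := gg_taylor θ s hθ hs.le hxs
  have h4 : |w| ≤ θ^2*s^2 := ee_taylor θ s hθ hs.le hxs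
  have hp : |s - θ*s^2/2| ≤ s := by
    rw [abs_le]; constructor <;> nlinarith
  have hq : |1 - θ*s| ≤ 1 := by
    rw [abs_le]; constructor <;> nlinarith
  have e1 : gg θ s * Real.exp (-(θ*s)) - (s - 3/2*θ*s^2)
      = (s - θ*s^2/2)*w + (1 - θ*s)*r + r*w + θ^2*s^3/2 := by
    rw [hrdef, hwdef]; ring
  have habs : |gg θ s * Real.exp (-(θ*s)) - (s - 3/2*θ*s^2)|
      ≤ s*(θ^2*s^2) + 1*(θ^2*s^3) + (θ^2*s^3)*(θ^2*s^2) + θ^2*s^3/2 := by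
    rw [e1]
    refine (abs_add_le _ _).trans (add_le_add ((abs_add_le _ _).trans (add_le_add
      ((abs_add_le _ _).trans (add_le_add ?_ ?_)) ?_)) ?_)
    · rw [abs_mul]
      exact mul_le_mul hp h4 (abs_nonneg w) hs.le
    · rw [abs_mul]
      exact mul_le_mul hq h1 (abs_nonneg r) zero_le_one
    · rw [abs_mul]
      exact mul_le_mul h1 h4 (abs_nonneg w) (by positivity)
    · rw [abs_of_nonneg (by positivity)]
  have hs3 : s^3 ≤ δ^3 := pow_le_pow_left₀ hs.le hsδ 3
  calc |gg θ s * Real.exp (-(θ*s)) - (s - 3/2*θ*s^2)|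
      ≤ s*(θ^2*s^2) + 1*(θ^2*s^3) + (θ^2*s^3)*(θ^2*s^2) + θ^2*s^3/2 := habs
    _ = (θ^2*s^3) + (θ^2*s^3) + (θ^2*s^2)*(θ^2*s^3) + (θ^2*s^3)/2 := by ring
    _ ≤ (θ^2*s^3) + (θ^2*s^3) + (1/4)*(θ^2*s^3) + (θ^2*s^3)/2 := by
        have : 0 ≤ θ^2*s^3 := by positivity
        nlinarith
    _ ≤ 4*(θ^2*s^3) := by nlinarith [sq_nonneg θ, pow_pos hs 3]
    _ ≤ 4*θ^2*δ^3 := by nlinarith [sq_nonneg θ]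

lemma pw_C (hθ : 0 ≤ θ) (s : ℝ) (hs : 0 < s) (hsδ : s ≤ δ) (hx : θ*δ ≤ 1/2) :
    |Real.exp (-(θ*s))^2 - (1 - 2*(θ*s))| ≤ 4*θ^2*δ^2 := by
  have hxs : θ*s ≤ 1/2 := by nlinarith
  have h := ee2_taylor θ s hθ hs.le hxs
  have hd : 0 < δ := lt_of_lt_of_le hs hsδ
  calc |Real.exp (-(θ*s))^2 - (1 - 2*(θ*s))| ≤ 4*θ^2*s^2 := h
    _ ≤ 4*θ^2*δ^2 := by nlinarith [sq_nonneg θ, pow_le_pow_left₀ hs.le hsδ 2]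

lemma intg_A (θ : ℝ) : Continuous fun s : ℝ => gg θ s^2 := (cont_gg θ).pow 2
lemma intg_B (θ : ℝ) : Continuous fun s : ℝ => gg θ s * Real.exp (-(θ*s)) := by
  have := cont_gg θ; fun_prop
lemma intg_C (θ : ℝ) : Continuous fun s : ℝ => Real.exp (-(θ*s))^2 := by fun_prop

lemma A_approx (hθ : 0 ≤ θ) (hδ : 0 < δ) (hx : θ*δ ≤ 1/2) :
    |(∫ s in (0:ℝ)..δ, gg θ s^2) - (δ^3/3 - θ*δ^4/4)| ≤ 4*θ^2*δ^5 := by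
  have hpoly : ∫ s in (0:ℝ)..δ, (s^2 - θ*s^3) = δ^3/3 - θ*δ^4/4 := by
    rw [intervalIntegral.integral_sub (Continuous.intervalIntegrable (by fun_prop) _ _)
      (Continuous.intervalIntegrable (by fun_prop) _ _),
      intervalIntegral.integral_const_mul, integral_pow, integral_pow]
    norm_num
    ring
  rw [← hpoly, ← intervalIntegral.integral_sub
    (Continuous.intervalIntegrable (intg_A θ) _ _)
    (Continuous.intervalIntegrable (by fun_prop) _ _)]
  have h := int_bound hδ.le (K := 4*θ^2*δ^4)
    (f := fun s => gg θ s^2 - (s^2 - θ*s^3))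
    (fun s hs hsδ => pw_A hθ s hs hsδ hx)
  calc _ ≤ 4*θ^2*δ^4*δ := h
    _ = 4*θ^2*δ^5 := by ring

lemma B_approx (hθ : 0 ≤ θ) (hδ : 0 < δ) (hx : θ*δ ≤ 1/2) :
    |(∫ s in (0:ℝ)..δ, gg θ s * Real.exp (-(θ*s))) - (δ^2/2 - θ*δ^3/2)| ≤ 4*θ^2*δ^4 := by
  have hpoly : ∫ s in (0:ℝ)..δ, (s - 3/2*θ*s^2) = δ^2/2 - θ*δ^3/2 := by
    rw [intervalIntegral.integral_sub (Continuous.intervalIntegrable (by fun_prop) _ _)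
      (Continuous.intervalIntegrable (by fun_prop) _ _),
      intervalIntegral.integral_const_mul, integral_pow, integral_id]
    norm_num
    ring
  rw [← hpoly, ← intervalIntegral.integral_sub
    (Continuous.intervalIntegrable (intg_B θ) _ _)
    (Continuous.intervalIntegrable (by fun_prop) _ _)]
  have h := int_bound hδ.le (K := 4*θ^2*δ^3)
    (f := fun s => gg θ s * Real.exp (-(θ*s)) - (s - 3/2*θ*s^2))
    (fun s hs hsδ => pw_B hθ s hs hsδ hx)
  calc _ ≤ 4*θ^2*δ^3*δ := h
    _ = 4*θ^2*δ^4 := by ring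

lemma C_approx (hθ : 0 ≤ θ) (hδ : 0 < δ) (hx : θ*δ ≤ 1/2) :
    |(∫ s in (0:ℝ)..δ, Real.exp (-(θ*s))^2) - (δ - θ*δ^2)| ≤ 4*θ^2*δ^3 := by
  have hpoly : ∫ s in (0:ℝ)..δ, (1 - 2*(θ*s)) = δ - θ*δ^2 := by
    have : ∀ s : ℝ, (1 - 2*(θ*s)) = 1 - (2*θ)*s := by intro s; ring
    rw [intervalIntegral.integral_congr (g := fun s => 1 - (2*θ)*s) (fun s _ => this s)]
    rw [intervalIntegral.integral_sub intervalIntegrable_const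
      (Continuous.intervalIntegrable (by fun_prop) _ _),
      intervalIntegral.integral_const_mul, integral_id]
    simp
    ring
  rw [← hpoly, ← intervalIntegral.integral_sub
    (Continuous.intervalIntegrable (intg_C θ) _ _)
    (Continuous.intervalIntegrable (by fun_prop) _ _)]
  have h := int_bound hδ.le (K := 4*θ^2*δ^2)
    (f := fun s => Real.exp (-(θ*s))^2 - (1 - 2*(θ*s)))
    (fun s hs hsδ => pw_C hθ s hs hsδ hx)
  calc _ ≤ 4*θ^2*δ^2*δ := h
    _ = 4*θ^2*δ^3 := by ring

lemma A_crude (hθ : 0 ≤ θ) (hδ : 0 < δ) (hδ1 : δ ≤ 1) :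
    |∫ s in (0:ℝ)..δ, gg θ s^2| ≤ δ^3 := by
  have h := int_bound hδ.le (K := δ^2) (f := fun s => gg θ s^2) ?_
  · calc _ ≤ δ^2*δ := h
      _ = δ^3 := by ring
  · intro s hs hsδ
    have h2 := gg_nonneg θ s hθ hs.le
    have h3 := gg_le θ s hθ hs.le
    rw [abs_of_nonneg (sq_nonneg _)]
    have e1 : gg θ s^2 ≤ s^2 := pow_le_pow_left₀ h2 h3 2
    have e2 : s^2 ≤ δ^2 := pow_le_pow_left₀ hs.le hsδ 2
    linarith

lemma B_crude (hθ : 0 ≤ θ) (hδ : 0 < δ) (hδ1 : δ ≤ 1) :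
    |∫ s in (0:ℝ)..δ, gg θ s * Real.exp (-(θ*s))| ≤ δ^2 := by
  have h := int_bound hδ.le (K := δ) (f := fun s => gg θ s * Real.exp (-(θ*s))) ?_
  · calc _ ≤ δ*δ := h
      _ = δ^2 := by ring
  · intro s hs hsδ
    have h2 := gg_nonneg θ s hθ hs.le
    have h3 := gg_le θ s hθ hs.le
    have h5 := (ee_pos θ s).le
    have h6 := ee_le_one θ s hθ hs.le
    rw [abs_of_nonneg (mul_nonneg h2 h5)]
    have e1 : gg θ s * Real.exp (-(θ*s)) ≤ s * 1 := mul_le_mul h3 h6 h5 hs.le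
    linarith

lemma C_crude (hθ : 0 ≤ θ) (hδ : 0 < δ) :
    |∫ s in (0:ℝ)..δ, Real.exp (-(θ*s))^2| ≤ δ := by
  have h := int_bound hδ.le (K := 1) (f := fun s => Real.exp (-(θ*s))^2) ?_
  · simpa using h
  · intro s hs hsδ
    have h5 := (ee_pos θ s).le
    have h6 := ee_le_one θ s hθ hs.le
    rw [abs_of_nonneg (sq_nonneg _)]
    nlinarith

lemma C_lower (hθ : 0 ≤ θ) (hδ : 0 < δ) (hδ1 : δ ≤ 1) :
    Real.exp (-(2*θ)) * δ ≤ ∫ s in (0:ℝ)..δ, Real.exp (-(θ*s))^2 := by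
  have hmono : ∀ s ∈ Set.Icc (0:ℝ) δ, Real.exp (-(2*θ)) ≤ Real.exp (-(θ*s))^2 := by
    intro s hsc
    have hsq : Real.exp (-(θ*s))^2 = Real.exp (-(2*(θ*s))) := by
      rw [← Real.exp_nat_mul]; ring_nf
    rw [hsq]
    apply Real.exp_le_exp.2
    nlinarith [hsc.1, hsc.2]
  have := intervalIntegral.integral_mono_on (f := fun _ => Real.exp (-(2*θ)))
    (g := fun s => Real.exp (-(θ*s))^2) (μ := volume) hδ.le
    intervalIntegrable_const (Continuous.intervalIntegrable (intg_C θ) _ _) hmono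
  simpa [mul_comm] using this

end estimates

lemma abstract_near (θ δ A B Cc E : ℝ) (hθ : 0 ≤ θ) (hδ : 0 < δ) (hδ1 : δ ≤ 1) (hE : 0 < E)
    (hClow : E*δ ≤ Cc) (hCub : Cc ≤ δ) (hBub : |B| ≤ δ^2)
    (hAap : |A - (δ^3/3 - θ*δ^4/4)| ≤ 4*θ^2*δ^5)
    (hBap : |B - (δ^2/2 - θ*δ^3/2)| ≤ 4*θ^2*δ^4)
    (hCap : |Cc - (δ - θ*δ^2)| ≤ 4*θ^2*δ^3) :
    |A - B^2/Cc - δ^3/12| ≤ (θ^2*(12+3*θ)/E)*δ^5 := by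
  have hCpos : 0 < Cc := lt_of_lt_of_le (by positivity) hClow
  have key : A*Cc - B^2 - Cc*(δ^3/12)
      = (A - (δ^3/3 - θ*δ^4/4))*Cc
        + (δ^3/3 - θ*δ^4/4)*(Cc - (δ - θ*δ^2))
        - (B - (δ^2/2 - θ*δ^3/2))*(B + (δ^2/2 - θ*δ^3/2))
        - (δ^3/12)*(Cc - (δ - θ*δ^2)) := by ring
  have hAbar : |δ^3/3 - θ*δ^4/4| ≤ (1/3 + θ/4)*δ^3 := by
    rw [abs_le]; constructor <;> nlinarith [pow_pos hδ 3, pow_pos hδ 4,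
      mul_nonneg hθ (pow_pos hδ 4).le, pow_le_pow_of_le_one hδ.le hδ1 (by norm_num : 3 ≤ 4)]
  have hBbar : |B + (δ^2/2 - θ*δ^3/2)| ≤ (3/2 + θ/2)*δ^2 := by
    have h1 : |δ^2/2 - θ*δ^3/2| ≤ (1/2 + θ/2)*δ^2 := by
      rw [abs_le]; constructor <;> nlinarith [pow_pos hδ 2, pow_pos hδ 3,
        mul_nonneg hθ (pow_pos hδ 3).le, pow_le_pow_of_le_one hδ.le hδ1 (by norm_num : 2 ≤ 3)]
    calc |B + (δ^2/2 - θ*δ^3/2)| ≤ |B| + |δ^2/2 - θ*δ^3/2| := abs_add_le _ _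
      _ ≤ δ^2 + (1/2 + θ/2)*δ^2 := add_le_add hBub h1
      _ = (3/2 + θ/2)*δ^2 := by ring
  have hnum : |A*Cc - B^2 - Cc*(δ^3/12)| ≤ (θ^2*(12+3*θ))*δ^6 := by
    rw [key]
    have t1 : |(A - (δ^3/3 - θ*δ^4/4))*Cc| ≤ 4*θ^2*δ^5*δ := by
      rw [abs_mul]
      refine mul_le_mul hAap ?_ (abs_nonneg _) (by positivity)
      rwa [abs_of_pos hCpos]
    have t2 : |(δ^3/3 - θ*δ^4/4)*(Cc - (δ - θ*δ^2))| ≤ ((1/3 + θ/4)*δ^3)*(4*θ^2*δ^3) := by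
      rw [abs_mul]
      exact mul_le_mul hAbar hCap (abs_nonneg _) (by positivity)
    have t3 : |(B - (δ^2/2 - θ*δ^3/2))*(B + (δ^2/2 - θ*δ^3/2))| ≤ (4*θ^2*δ^4)*((3/2 + θ/2)*δ^2) := by
      rw [abs_mul]
      exact mul_le_mul hBap hBbar (abs_nonneg _) (by positivity)
    have t4 : |(δ^3/12)*(Cc - (δ - θ*δ^2))| ≤ (δ^3/12)*(4*θ^2*δ^3) := by
      rw [abs_mul, abs_of_nonneg (by positivity : (0:ℝ) ≤ δ^3/12)]
      exact mul_le_mul_of_nonneg_left hCap (by positivity)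
    have chain : |(A - (δ^3/3 - θ*δ^4/4))*Cc
        + (δ^3/3 - θ*δ^4/4)*(Cc - (δ - θ*δ^2))
        - (B - (δ^2/2 - θ*δ^3/2))*(B + (δ^2/2 - θ*δ^3/2))
        - (δ^3/12)*(Cc - (δ - θ*δ^2))|
        ≤ |(A - (δ^3/3 - θ*δ^4/4))*Cc| + |(δ^3/3 - θ*δ^4/4)*(Cc - (δ - θ*δ^2))|
          + |(B - (δ^2/2 - θ*δ^3/2))*(B + (δ^2/2 - θ*δ^3/2))|
          + |(δ^3/12)*(Cc - (δ - θ*δ^2))| := by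
      refine (abs_sub _ _).trans (add_le_add ((abs_sub _ _).trans
        (add_le_add (abs_add_le _ _) le_rfl)) le_rfl)
    refine chain.trans ((add_le_add (add_le_add (add_le_add t1 t2) t3) t4).trans ?_)
    have hpos : 0 ≤ θ^2*δ^6 := by positivity
    have hid : (θ^2*(12+3*θ))*δ^6
        - (4*θ^2*δ^5*δ + ((1/3 + θ/4)*δ^3)*(4*θ^2*δ^3)
          + (4*θ^2*δ^4)*((3/2 + θ/2)*δ^2) + (δ^3/12)*(4*θ^2*δ^3))
        = (θ^2*δ^6)/3 := by ring
    linarith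
  have hrw : A - B^2/Cc - δ^3/12 = (A*Cc - B^2 - Cc*(δ^3/12))/Cc := by
    rw [eq_div_iff (ne_of_gt hCpos)]
    field_simp
  rw [hrw, abs_div, abs_of_pos hCpos]
  have step : |A*Cc - B^2 - Cc*(δ^3/12)|/Cc ≤ ((θ^2*(12+3*θ))*δ^6)/(E*δ) :=
    div_le_div₀ (by positivity) hnum (by positivity) hClow
  refine step.trans (le_of_eq ?_)
  field_simp

lemma abstract_far (θ δ A B Cc E : ℝ) (hδ : 0 < δ) (hE : 0 < E)
    (hClow : E*δ ≤ Cc) (hAub : |A| ≤ δ^3) (hBub : |B| ≤ δ^2) :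
    |A - B^2/Cc - δ^3/12| ≤ (2 + 1/E)*δ^3 := by
  have hCpos : 0 < Cc := lt_of_lt_of_le (by positivity) hClow
  have hB2 : B^2/Cc ≤ (1/E)*δ^3 := by
    have hB2' : B^2 ≤ δ^4 := by
      have h := sq_abs B
      nlinarith [abs_nonneg B, pow_pos hδ 2]
    calc B^2/Cc ≤ δ^4/(E*δ) := div_le_div₀ (by positivity) hB2' (by positivity) hClow
      _ = (1/E)*δ^3 := by field_simp
  have hq : 0 ≤ B^2/Cc := by positivity
  have h3 : 0 < δ^3 := pow_pos hδ 3
  rw [abs_le]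
  constructor <;> nlinarith [le_abs_self A, neg_abs_le A, hE, one_div_pos.2 hE]

lemma key_scalar (θ : ℝ) (hθ : 0 ≤ θ) :
    ∃ C0 : ℝ, 0 < C0 ∧ ∀ δ : ℝ, 0 < δ → δ ≤ 1 →
      |(∫ s in (0:ℝ)..δ, gg θ s^2)
        - (∫ s in (0:ℝ)..δ, gg θ s * Real.exp (-(θ*s)))^2
            / (∫ s in (0:ℝ)..δ, Real.exp (-(θ*s))^2)
        - δ^3/12| ≤ C0 * δ^5 := by
  have hE : 0 < Real.exp (-(2*θ)) := Real.exp_pos _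
  have hδ0 : 0 < 1/(2*θ+2) := by positivity
  refine ⟨θ^2*(12+3*θ)/Real.exp (-(2*θ)) + (2 + 1/Real.exp (-(2*θ)))/(1/(2*θ+2))^2 + 1,
    by positivity, ?_⟩
  intro δ hδ hδ1
  have hClow := C_lower hθ hδ hδ1
  have hCub := le_of_abs_le (C_crude hθ hδ)
  have hAub := A_crude hθ hδ hδ1
  have hBub := B_crude hθ hδ hδ1
  rcases le_or_gt δ (1/(2*θ+2)) with hcase | hcase
  · have hx : θ*δ ≤ 1/2 := by
      have h2 : (0:ℝ) < 2*θ+2 := by linarith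
      have hm : θ*δ ≤ θ*(1/(2*θ+2)) := mul_le_mul_of_nonneg_left hcase hθ
      have : θ*(1/(2*θ+2)) ≤ 1/2 := by
        rw [mul_one_div, div_le_div_iff₀ h2 (by norm_num)]
        linarith
      linarith
    have hmain := abstract_near θ δ _ _ _ _ hθ hδ hδ1 hE hClow hCub hBub
      (A_approx hθ hδ hx) (B_approx hθ hδ hx) (C_approx hθ hδ hx)
    refine hmain.trans ?_
    apply mul_le_mul_of_nonneg_right _ (by positivity)
    have h1 : 0 < (2 + 1/Real.exp (-(2*θ)))/(1/(2*θ+2))^2 := by positivity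
    linarith
  · have hfar := abstract_far θ δ _ _ _ _ hδ hE hClow hAub hBub
    refine hfar.trans ?_
    have hδ35 : δ^3 ≤ δ^5/(1/(2*θ+2))^2 := by
      rw [le_div_iff₀ (by positivity)]
      have h2 : (1/(2*θ+2))^2 ≤ δ^2 := by
        have := pow_le_pow_left₀ hδ0.le hcase.le 2
        nlinarith
      nlinarith [pow_pos hδ 3]
    have hM : (0:ℝ) < 2 + 1/Real.exp (-(2*θ)) := by positivity
    calc (2 + 1/Real.exp (-(2*θ)))*δ^3
        ≤ (2 + 1/Real.exp (-(2*θ)))*(δ^5/(1/(2*θ+2))^2) := by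
          exact mul_le_mul_of_nonneg_left hδ35 hM.le
      _ = ((2 + 1/Real.exp (-(2*θ)))/(1/(2*θ+2))^2)*δ^5 := by ring
      _ ≤ (θ^2*(12+3*θ)/Real.exp (-(2*θ)) + (2 + 1/Real.exp (-(2*θ)))/(1/(2*θ+2))^2 + 1)*δ^5 := by
          apply mul_le_mul_of_nonneg_right _ (by positivity)
          have h1 : 0 ≤ θ^2*(12+3*θ)/Real.exp (-(2*θ)) := by positivity
          linarith

lemma collect (η A B Cc : ℝ) (hη : η ≠ 0) (hC : Cc ≠ 0) :
    η^2*A - η^2*B*(η^2*B)/(η^2*Cc) = η^2*(A - B^2/Cc) := by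
  field_simp

/-- The one-step EKF0 posterior variance of the solution component is
`P(δ)₀,₀ = η²·δ³/12 + O(δ⁵)`, with a constant depending only on `θ` and `η`. -/
theorem ekf0_posterior_variance (θ η : ℝ) (hθ : 0 ≤ θ) (hη : 0 < η) :
    ∃ C : ℝ, 0 < C ∧ ∀ δ : ℝ, 0 < δ → δ ≤ 1 →
      |Pmat θ η δ 0 0 - η ^ 2 * δ ^ 3 / 12| ≤ C * δ ^ 5 := by
  obtain ⟨C0, hC0, hbound⟩ := key_scalar θ hθ
  refine ⟨η^2 * C0, by positivity, ?_⟩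
  intro δ hδ hδ1
  obtain ⟨hQ00, hQ01, hQ10, hQ11⟩ := Q_entries θ η δ
  have hClow := C_lower hθ hδ hδ1
  have hCpos : 0 < ∫ s in (0:ℝ)..δ, Real.exp (-(θ*s))^2 :=
    lt_of_lt_of_le (by positivity) hClow
  have hz : Qmat θ η δ 1 1 ≠ 0 := by
    rw [hQ11]
    exact ne_of_gt (mul_pos (by positivity) hCpos)
  rw [P00_eq θ η δ hz, hQ00, hQ01, hQ10, hQ11]
  rw [collect η _ _ _ (ne_of_gt hη) (ne_of_gt hCpos)]
  have hsplit : η^2*((∫ s in (0:ℝ)..δ, gg θ s^2)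
      - (∫ s in (0:ℝ)..δ, gg θ s * Real.exp (-(θ*s)))^2
        / (∫ s in (0:ℝ)..δ, Real.exp (-(θ*s))^2)) - η ^ 2 * δ ^ 3 / 12
      = η^2*(((∫ s in (0:ℝ)..δ, gg θ s^2)
        - (∫ s in (0:ℝ)..δ, gg θ s * Real.exp (-(θ*s)))^2
          / (∫ s in (0:ℝ)..δ, Real.exp (-(θ*s))^2)) - δ^3/12) := by ring
  rw [hsplit, abs_mul, abs_of_pos (by positivity : (0:ℝ) < η^2), mul_assoc]
  exact mul_le_mul_of_nonneg_left (hbound δ hδ hδ1) (by positivity)
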